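/- Let a loony endgame configuration of Dots & Boxes have k nodes of degree greater than 2 in its dual graph (boxes or the outer face), with T the sum of the degrees of these nodes, and suppose every chain has both of its ends attached to such high-degree nodes. In any complete play of the endgame in which one player only makes loony moves opening chains and cycles and the other player claims each opened chain or cycle entirely (up to double-dealing moves), the number ℓ of chain-opening moves satisfies T = 2ℓ + 2k; in particular, ℓ is the same for every such play. -/

import Mathlib

/-!
A loony endgame configuration of Dots & Boxes, described through the high-degree
nodes of its dual graph: `J` is the (finite) set of nodes (boxes or the outer
face) of degree greater than 2, with degree function `deg : J → ℕ`.  One player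
only makes loony moves opening chains and cycles, and the other player claims
each opened chain or cycle entirely (up to double-dealing moves).  Opening a
chain removes one unit of degree from each of the two high-degree nodes at its
ends (every chain has both of its ends attached to high-degree nodes); opening a
cycle leaves the degrees unchanged.  A node that drops to degree 2 joins a chain
or cycle and is no longer high-degree; the play is complete when every node of
`J` has dropped to degree exactly 2.
-/

/-- An opening move: either open a chain, whose two ends are attached to the
high-degree nodes `e₁` and `e₂`, or open a cycle. -/
inductive Opening (J : Type) where
  | chain (e₁ e₂ : J)
  | cyc

variable {J : Type} [DecidableEq J]

/-- Opening a chain decreases the degree of each of its two end nodes by one;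
opening a cycle leaves the degrees unchanged. -/
def degStep (s : J → ℕ) : Opening J → J → ℕ
  | .chain e₁ e₂ => fun j => s j - (if j = e₁ then 1 else 0) - (if j = e₂ then 1 else 0)
  | .cyc => s

/-- The degrees of the high-degree nodes after a sequence of openings. -/
def degAfter (s : J → ℕ) : List (Opening J) → J → ℕ
  | [] => s
  | o :: os => degAfter (degStep s o) os

/-- A play is valid when every opened chain has both of its ends attached to
nodes whose current degree is greater than 2. -/
def ValidPlay : (J → ℕ) → List (Opening J) → Prop
  | _, [] => True
  | s, Opening.chain e₁ e₂ :: os =>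
      2 < s e₁ ∧ 2 < s e₂ ∧ ValidPlay (degStep s (Opening.chain e₁ e₂)) os
  | s, Opening.cyc :: os => ValidPlay (degStep s Opening.cyc) os

/-- A play is complete when every high-degree node has dropped to degree
exactly 2 (so that it has merged into a chain or cycle). -/
def CompletePlay (s : J → ℕ) (os : List (Opening J)) : Prop :=
  ∀ j, degAfter s os j = 2

/-- The number of chain-opening moves in a play. -/
def chainCount (os : List (Opening J)) : ℕ :=
  os.countP fun o => match o with | .chain _ _ => true | .cyc => false

lemma sum_degAfter [Fintype J] (os : List (Opening J)) :
    ∀ s : J → ℕ, ValidPlay s os →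
      (∑ j, degAfter s os j) + 2 * chainCount os = ∑ j, s j := by
  induction os with
  | nil => intro s _; simp [degAfter, chainCount]
  | cons o os ih =>
    intro s hv
    cases o with
    | chain e₁ e₂ =>
      obtain ⟨h1, h2, hv'⟩ := hv
      have key : ∑ j, degStep s (Opening.chain e₁ e₂) j + 2 = ∑ j, s j := by
        have : ∀ j, degStep s (Opening.chain e₁ e₂) j +
            ((if j = e₁ then 1 else 0) + (if j = e₂ then 1 else 0)) = s j := by
          intro j
          simp only [degStep]
          by_cases hj1 : j = e₁ <;> by_cases hj2 : j = e₂ <;>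
            simp_all <;> omega
        calc ∑ j, degStep s (Opening.chain e₁ e₂) j + 2
            = ∑ j, (degStep s (Opening.chain e₁ e₂) j +
              ((if j = e₁ then 1 else 0) + (if j = e₂ then 1 else 0))) := by
              rw [Finset.sum_add_distrib, Finset.sum_add_distrib]
              simp [Finset.sum_ite_eq']
          _ = ∑ j, s j := by simp_rw [this]
      have hcc : chainCount (Opening.chain e₁ e₂ :: os) = chainCount os + 1 := by
        simp [chainCount]
      rw [hcc]
      have := ih (degStep s (Opening.chain e₁ e₂)) hv'
      simp only [degAfter]
      omega
    | cyc =>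
      have := ih (degStep s Opening.cyc) hv
      have hcc : chainCount (Opening.cyc :: os) = chainCount os := by
        simp [chainCount]
      rw [hcc]
      simpa [degAfter, degStep] using this

lemma play_count [Fintype J] (deg : J → ℕ) (os : List (Opening J))
    (hvalid : ValidPlay deg os) (hcomplete : CompletePlay deg os) :
    (∑ j, deg j) = 2 * chainCount os + 2 * Fintype.card J := by
  have := sum_degAfter os deg hvalid
  have h2 : ∑ j, degAfter deg os j = 2 * Fintype.card J := by
    calc ∑ j, degAfter deg os j = ∑ _j : J, 2 :=
          Finset.sum_congr rfl (fun j _ => hcomplete j)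
      _ = 2 * Fintype.card J := by simp [mul_comm]
  omega

/-- If the dual graph of a loony endgame configuration has `k`
nodes of degree greater than 2, of total degree `T`, and every chain has both of
its ends attached to such high-degree nodes, then in any complete play of the
endgame the number `ℓ` of chain-opening moves satisfies `T = 2ℓ + 2k`; in
particular `ℓ` is the same for every such play. -/
theorem chain_openings_count [Fintype J]
    (deg : J → ℕ) (hdeg : ∀ j, 2 < deg j)
    (k T : ℕ) (hk : k = Fintype.card J) (hT : T = ∑ j, deg j)
    (os : List (Opening J))
    (hvalid : ValidPlay deg os) (hcomplete : CompletePlay deg os) :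
    T = 2 * chainCount os + 2 * k ∧
      ∀ os' : List (Opening J), ValidPlay deg os' → CompletePlay deg os' →
        chainCount os' = chainCount os := by
  subst hk hT
  have h := play_count deg os hvalid hcomplete
  refine ⟨h, fun os' hv' hc' => ?_⟩
  have h' := play_count deg os' hv' hc'
  omega
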